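/- arXiv:2301.08540 — 5 statements merged into one kernel-verified Lean document; each statement's English description precedes it below -/
import Mathlib

section
/- Let (x_k) be a sequence of positive reals with x_{k+1} ≥ 2 x_k and x_k ≥ 2k for all k ≥ 0. Then for every n ∈ ℤ and k, m ∈ ℕ, if |n ± x_k| = m + x_m (for either choice of sign), then either |n| = m or |n| ≥ x_m / 2. -/
theorem stmt_0 (x : ℕ → ℝ) (hpos : ∀ k, 0 < x k)
    (hdouble : ∀ k, 2 * x k ≤ x (k + 1)) (hgrow : ∀ k : ℕ, (2 * k : ℝ) ≤ x k)
    (n : ℤ) (k m : ℕ)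
    (h : |(n : ℝ) + x k| = m + x m ∨ |(n : ℝ) - x k| = m + x m) :
    |(n : ℝ)| = m ∨ x m / 2 ≤ |(n : ℝ)| := by
  have hmono : Monotone x := monotone_nat_of_le_succ (fun j => by
    have h1 := hdouble j; have h2 := hpos j; linarith)
  have hkey : ∀ a b : ℕ, a < b → 2 * x a ≤ x b := fun a b hab =>
    le_trans (hdouble a) (hmono hab)
  have hm0 : (0:ℝ) ≤ m := Nat.cast_nonneg m
  have hxm := hpos m
  have hxk := hpos k
  have hgm := hgrow m
  have hnn : (0:ℝ) ≤ m + x m := by linarith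
  have hcmp : 2 * x k ≤ x m ∨ x k = x m ∨ 2 * x m ≤ x k := by
    rcases lt_trichotomy k m with h' | h' | h'
    · exact Or.inl (hkey k m h')
    · exact Or.inr (Or.inl (by rw [h']))
    · exact Or.inr (Or.inr (hkey m k h'))
  rcases h with h | h <;> rw [abs_eq hnn] at h <;>
    rcases h with h | h <;>
    rcases hcmp with key | key | key <;>
    rcases abs_cases ((n:ℝ)) with ⟨he, hsn⟩ | ⟨he, hsn⟩ <;> rw [he] <;>
    first
      | (left; linarith)
      | (right; linarith)
end

section
/- Let φ : [0, ∞) → (0, ∞) be a decreasing continuous function such that r^{d−1} φ(r) is integrable on [0, ∞), and suppose there is c₂ ≥ 1 with φ(r/2) ≤ c₂ φ(r) for all r ≥ 0. Then there is ε > 0 such that Y(x) = ε φ(|x|) satisfies (Y * Y)(x) ≤ Y(x) for all x ∈ ℝ^d. -/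
open MeasureTheory Set Filter
set_option maxHeartbeats 1000000

lemma radial_integrable (d : ℕ) (hd : 1 ≤ d) (f : ℝ → ℝ)
    (hcont : ContinuousOn f (Set.Ici 0))
    (hint : IntegrableOn (fun r => r ^ (d - 1) * f r) (Set.Ioi 0)) :
    Integrable (fun x : EuclideanSpace ℝ (Fin d) => f ‖x‖) := by
  set E := EuclideanSpace ℝ (Fin d)
  haveI : Nonempty (Fin d) := ⟨⟨0, hd⟩⟩
  haveI : Nontrivial E := by
    refine ⟨EuclideanSpace.single ⟨0, hd⟩ 1, 0, ?_⟩
    intro h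
    have := congrArg (fun v : E => v ⟨0, hd⟩) h
    simp at this
  have hdim : Module.finrank ℝ E = d := finrank_euclideanSpace_fin
  -- Step D : integrability w.r.t. volumeIoiPow
  have hD : Integrable (fun r : Ioi (0:ℝ) => f r.1)
      (Measure.volumeIoiPow (d - 1)) := by
    rw [Measure.volumeIoiPow, integrable_withDensity_iff
      (by exact (measurable_subtype_coe.pow_const _).ennreal_ofReal)
      (Eventually.of_forall fun r => ENNReal.ofReal_lt_top)]
    have hmap : Measure.map (Subtype.val : Ioi (0:ℝ) → ℝ)
        (Measure.comap Subtype.val volume) = volume.restrict (Ioi 0) :=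
      map_comap_subtype_coe measurableSet_Ioi _
    have hiff : Integrable (fun r : ℝ => f r * (ENNReal.ofReal (r ^ (d - 1))).toReal)
        (volume.restrict (Ioi 0)) ↔
        Integrable ((fun r : ℝ => f r * (ENNReal.ofReal (r ^ (d - 1))).toReal) ∘
          (Subtype.val : Ioi (0:ℝ) → ℝ)) (Measure.comap Subtype.val volume) := by
      rw [← hmap]
      exact (MeasurableEmbedding.subtype_coe measurableSet_Ioi).integrable_map_iff
    refine hiff.1 ?_
    apply (hint.congr_fun ?_ measurableSet_Ioi)
    intro r hr
    simp only
    rw [ENNReal.toReal_ofReal (pow_nonneg (le_of_lt hr) _), mul_comm]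
  -- Step C : integrability on the product
  have hC : Integrable (fun z : Metric.sphere (0:E) 1 × Ioi (0:ℝ) => f z.2.1)
      ((volume : Measure E).toSphere.prod (Measure.volumeIoiPow (d - 1))) := by
    have := (integrable_const (1:ℝ) (μ := (volume : Measure E).toSphere)).smul_prod hD
    simpa using this
  -- Step B : pull back along the homeomorphism
  have hB : Integrable (fun x : ({0}ᶜ : Set E) => f ‖x.1‖)
      (Measure.comap Subtype.val (volume : Measure E)) := by
    have hmp := (volume : Measure E).measurePreserving_homeomorphUnitSphereProd
    rw [hdim] at hmp
    have h2 : Integrable ((fun z : Metric.sphere (0:E) 1 × Ioi (0:ℝ) => f z.2.1) ∘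
        (homeomorphUnitSphereProd E)) (Measure.comap Subtype.val (volume : Measure E)) :=
      (hmp.integrable_comp_emb (Homeomorph.measurableEmbedding _)).2 hC
    convert h2 using 2 with x
    simp [homeomorphUnitSphereProd]
  -- Step A : back to E
  have hmap : Measure.map (Subtype.val : ({0}ᶜ : Set E) → E)
      (Measure.comap Subtype.val volume) = (volume : Measure E).restrict ({0}ᶜ) :=
    map_comap_subtype_coe (measurableSet_singleton (0:E)).compl _
  have hiff : Integrable (fun x : E => f ‖x‖) ((volume : Measure E).restrict ({0}ᶜ)) ↔
      Integrable ((fun x : E => f ‖x‖) ∘ (Subtype.val : ({0}ᶜ : Set E) → E))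
        (Measure.comap Subtype.val volume) := by
    rw [← hmap]
    exact (MeasurableEmbedding.subtype_coe
      (measurableSet_singleton (0:E)).compl).integrable_map_iff
  rw [restrict_compl_singleton] at hiff
  exact hiff.2 hB

open MeasureTheory in
theorem stmt_7 (d : ℕ) (hd : 1 ≤ d) (φ : ℝ → ℝ)
    (hpos : ∀ r, 0 ≤ r → 0 < φ r)
    (hmono : ∀ a b, 0 ≤ a → a ≤ b → φ b ≤ φ a)
    (hcont : ContinuousOn φ (Set.Ici 0))
    (hint : IntegrableOn (fun r => r ^ (d - 1) * φ r) (Set.Ici 0))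
    (c₂ : ℝ) (hc₂ : 1 ≤ c₂) (hdbl : ∀ r, 0 ≤ r → φ (r / 2) ≤ c₂ * φ r) :
    ∃ ε > 0, ∀ x : EuclideanSpace ℝ (Fin d),
      (∫ y, (ε * φ ‖x - y‖) * (ε * φ ‖y‖)) ≤ ε * φ ‖x‖ := by
  have hInt : Integrable (fun y : EuclideanSpace ℝ (Fin d) => φ ‖y‖) :=
    radial_integrable d hd φ hcont (hint.mono_set Set.Ioi_subset_Ici_self)
  obtain ⟨I, hI⟩ : ∃ I : ℝ, I = ∫ y : EuclideanSpace ℝ (Fin d), φ ‖y‖ := ⟨_, rfl⟩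
  have hIpos : 0 < I := by
    rw [hI, integral_pos_iff_support_of_nonneg (fun y => (hpos _ (norm_nonneg y)).le) hInt]
    have hs : Function.support (fun y : EuclideanSpace ℝ (Fin d) => φ ‖y‖) = Set.univ := by
      ext y; simp [Function.support, (hpos _ (norm_nonneg y)).ne']
    rw [hs]
    exact isOpen_univ.measure_pos volume Set.univ_nonempty
  have hc₂pos : (0:ℝ) < c₂ := lt_of_lt_of_le one_pos hc₂
  have h2cI : (0:ℝ) < 2 * c₂ * I := by nlinarith
  refine ⟨(2 * c₂ * I)⁻¹, inv_pos.mpr h2cI, fun x => ?_⟩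
  generalize hε : (2 * c₂ * I)⁻¹ = ε
  have hεpos : 0 < ε := hε ▸ inv_pos.mpr h2cI
  have hε1 : ε * (2 * c₂ * I) = 1 := by rw [← hε]; exact inv_mul_cancel₀ h2cI.ne'
  have hφx : 0 < φ ‖x‖ := hpos _ (norm_nonneg x)
  obtain ⟨C, hC⟩ : ∃ C : ℝ, C = ε ^ 2 * c₂ * φ ‖x‖ := ⟨_, rfl⟩
  have hCpos : 0 < C := by
    rw [hC]; exact mul_pos (mul_pos (pow_pos hεpos 2) hc₂pos) hφx
  have hdb : φ (‖x‖ / 2) ≤ c₂ * φ ‖x‖ := hdbl _ (norm_nonneg x)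
  have hIntx : Integrable (fun y => φ ‖x - y‖) := hInt.comp_sub_left x
  have hg : Integrable (fun y => C * (φ ‖y‖ + φ ‖x - y‖)) :=
    (hInt.add hIntx).const_mul C
  have hbound : ∀ y, (ε * φ ‖x - y‖) * (ε * φ ‖y‖) ≤ C * (φ ‖y‖ + φ ‖x - y‖) := by
    intro y
    have h2 := (hpos _ (norm_nonneg (x - y))).le
    have h3 := (hpos _ (norm_nonneg y)).le
    rcases le_or_gt (‖x‖ / 2) ‖y‖ with h | h
    · have h1 : φ ‖y‖ ≤ c₂ * φ ‖x‖ :=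
        (hmono _ _ (by positivity) h).trans hdb
      calc (ε * φ ‖x - y‖) * (ε * φ ‖y‖)
          ≤ (ε * φ ‖x - y‖) * (ε * (c₂ * φ ‖x‖)) := by
            apply mul_le_mul_of_nonneg_left (by nlinarith) (mul_nonneg hεpos.le h2)
        _ = C * φ ‖x - y‖ := by rw [hC]; ring
        _ ≤ C * (φ ‖y‖ + φ ‖x - y‖) := by nlinarith
    · have hxy : ‖x‖ / 2 ≤ ‖x - y‖ := by
        have h4 := norm_sub_norm_le x y
        linarith
      have h1 : φ ‖x - y‖ ≤ c₂ * φ ‖x‖ :=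
        (hmono _ _ (by positivity) hxy).trans hdb
      calc (ε * φ ‖x - y‖) * (ε * φ ‖y‖)
          ≤ (ε * (c₂ * φ ‖x‖)) * (ε * φ ‖y‖) := by
            apply mul_le_mul_of_nonneg_right (by nlinarith) (mul_nonneg hεpos.le h3)
        _ = C * φ ‖y‖ := by rw [hC]; ring
        _ ≤ C * (φ ‖y‖ + φ ‖x - y‖) := by nlinarith
  have hmono_int : (∫ y, (ε * φ ‖x - y‖) * (ε * φ ‖y‖))
      ≤ ∫ y, C * (φ ‖y‖ + φ ‖x - y‖) := by
    apply integral_mono_of_nonneg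
    · exact Filter.Eventually.of_forall fun y =>
        mul_nonneg (mul_nonneg hεpos.le (hpos _ (norm_nonneg (x - y))).le)
          (mul_nonneg hεpos.le (hpos _ (norm_nonneg y)).le)
    · exact hg
    · exact Filter.Eventually.of_forall hbound
  have hval : (∫ y, C * (φ ‖y‖ + φ ‖x - y‖)) = C * (2 * I) := by
    rw [show (fun y : EuclideanSpace ℝ (Fin d) => C * (φ ‖y‖ + φ ‖x - y‖))
        = (fun y : EuclideanSpace ℝ (Fin d) => C • (φ ‖y‖ + φ ‖x - y‖)) from rfl,
      integral_smul, smul_eq_mul, integral_add hInt hIntx,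
      integral_sub_left_eq_self (fun y : EuclideanSpace ℝ (Fin d) => φ ‖y‖) volume x]
    rw [hI]; ring
  have hfin : C * (2 * I) = ε * φ ‖x‖ := by
    rw [hC]
    have : ε ^ 2 * c₂ * φ ‖x‖ * (2 * I) = (ε * (2 * c₂ * I)) * (ε * φ ‖x‖) := by ring
    rw [this, hε1, one_mul]
  exact hmono_int.trans (le_of_eq (hval.trans hfin))
end

section
/- Let α > 0 and d ≥ 1. The function Y(x) = (1 + |x|)^{−d−α} on ℝ^d satisfies: there exists a constant C such that (Y * Y)(x) ≤ C · Y(x) for all x ∈ ℝ^d. -/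
open MeasureTheory Real Module

theorem stmt_9 (d : ℕ) (hd : 1 ≤ d) (α : ℝ) (hα : 0 < α) :
    ∃ C : ℝ, ∀ x : EuclideanSpace ℝ (Fin d),
      (∫ y, (1 + ‖x - y‖) ^ (-(d : ℝ) - α) * (1 + ‖y‖) ^ (-(d : ℝ) - α)) ≤
        C * (1 + ‖x‖) ^ (-(d : ℝ) - α) := by
  set p : ℝ := (d : ℝ) + α with hp
  have hp0 : 0 < p := by positivity
  have hexp : -(d : ℝ) - α = -p := by rw [hp]; ring
  set f : EuclideanSpace ℝ (Fin d) → ℝ := fun y => (1 + ‖y‖) ^ (-p) with hf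
  have hfpos : ∀ y, 0 < f y := fun y => rpow_pos_of_pos (by positivity) _
  have hfle1 : ∀ y, f y ≤ 1 := fun y =>
    rpow_le_one_of_one_le_of_nonpos (by simp [norm_nonneg]) (by linarith)
  have hfc : Continuous f :=
    (continuous_const.add continuous_norm).rpow_const fun y => Or.inl (ne_of_gt (by have := norm_nonneg y; show (0:ℝ) < 1 + ‖y‖; linarith))
  have hI : Integrable f := by
    have : (finrank ℝ (EuclideanSpace ℝ (Fin d)) : ℝ) < p := by
      rw [finrank_euclideanSpace_fin]; linarith
    simpa [hf] using integrable_one_add_norm (E := EuclideanSpace ℝ (Fin d)) this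
  -- key pointwise lemma
  have keyA : ∀ (s t : ℝ), 0 ≤ s → 0 ≤ t → s ≤ 2 * t →
      (1 + t) ^ (-p) ≤ 2 ^ p * (1 + s) ^ (-p) := by
    intro s t hs ht hst
    have h1 : (0 : ℝ) < 1 + s := by linarith
    have h2 : 1 + s ≤ 2 * (1 + t) := by linarith
    have h3 : (2 * (1 + t)) ^ (-p) ≤ (1 + s) ^ (-p) :=
      rpow_le_rpow_of_nonpos h1 h2 (by linarith)
    have h4 : (2 * (1 + t)) ^ (-p) = 2 ^ (-p) * (1 + t) ^ (-p) :=
      mul_rpow (by norm_num) (by linarith)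
    have h5 : (0 : ℝ) < 2 ^ p := rpow_pos_of_pos (by norm_num) _
    calc (1 + t) ^ (-p) = 2 ^ p * (2 ^ (-p) * (1 + t) ^ (-p)) := by
          rw [← mul_assoc, ← rpow_add (by norm_num : (0:ℝ) < 2)]
          simp
      _ ≤ 2 ^ p * (1 + s) ^ (-p) := by
          rw [← h4]; exact mul_le_mul_of_nonneg_left h3 h5.le
  refine ⟨2 ^ p * (2 * ∫ y, f y), fun x => ?_⟩
  have hIx : Integrable (fun y => f (x - y)) := hI.comp_sub_left x
  have hg : Integrable (fun y => f (x - y) * f y) := by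
    refine hI.mono' ((hfc.comp (continuous_const.sub continuous_id)).mul hfc).aestronglyMeasurable
      (Filter.Eventually.of_forall fun y => ?_)
    rw [Real.norm_of_nonneg (mul_nonneg (hfpos _).le (hfpos _).le)]
    calc f (x - y) * f y ≤ 1 * f y :=
          mul_le_mul_of_nonneg_right (hfle1 _) (hfpos _).le
      _ = f y := one_mul _
  have hpt : ∀ y, f (x - y) * f y ≤ 2 ^ p * (1 + ‖x‖) ^ (-p) * (f (x - y) + f y) := by
    intro y
    rcases le_or_gt ‖x‖ (2 * ‖y‖) with h | h
    · have : f y ≤ 2 ^ p * (1 + ‖x‖) ^ (-p) := keyA _ _ (norm_nonneg _) (norm_nonneg _) h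
      calc f (x - y) * f y ≤ f (x - y) * (2 ^ p * (1 + ‖x‖) ^ (-p)) :=
            mul_le_mul_of_nonneg_left this (hfpos _).le
        _ = 2 ^ p * (1 + ‖x‖) ^ (-p) * f (x - y) := by ring
        _ ≤ 2 ^ p * (1 + ‖x‖) ^ (-p) * (f (x - y) + f y) := by
            have h0 : (0:ℝ) ≤ 2 ^ p * (1 + ‖x‖) ^ (-p) :=
              mul_nonneg (rpow_pos_of_pos (by norm_num) _).le (rpow_pos_of_pos (by positivity) _).le
            exact mul_le_mul_of_nonneg_left (by linarith [(hfpos y).le]) h0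
    · have hxy : ‖x‖ ≤ 2 * ‖x - y‖ := by
        have := norm_sub_norm_le x y
        have h2 : ‖x‖ - ‖y‖ ≤ ‖x - y‖ := this
        nlinarith [norm_nonneg (x - y)]
      have : f (x - y) ≤ 2 ^ p * (1 + ‖x‖) ^ (-p) :=
        keyA _ _ (norm_nonneg _) (norm_nonneg _) hxy
      calc f (x - y) * f y ≤ 2 ^ p * (1 + ‖x‖) ^ (-p) * f y :=
            mul_le_mul_of_nonneg_right this (hfpos _).le
        _ ≤ 2 ^ p * (1 + ‖x‖) ^ (-p) * (f (x - y) + f y) := by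
            have h0 : (0:ℝ) ≤ 2 ^ p * (1 + ‖x‖) ^ (-p) :=
              mul_nonneg (rpow_pos_of_pos (by norm_num) _).le (rpow_pos_of_pos (by positivity) _).le
            exact mul_le_mul_of_nonneg_left (by linarith [(hfpos (x - y)).le]) h0
  have hRHSint : Integrable (fun y => 2 ^ p * (1 + ‖x‖) ^ (-p) * (f (x - y) + f y)) :=
    (hIx.add hI).const_mul _
  have hmono : (∫ y, f (x - y) * f y) ≤
      ∫ y, 2 ^ p * (1 + ‖x‖) ^ (-p) * (f (x - y) + f y) :=
    integral_mono hg hRHSint hpt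
  have hsum : (∫ y, 2 ^ p * (1 + ‖x‖) ^ (-p) * (f (x - y) + f y)) =
      2 ^ p * (1 + ‖x‖) ^ (-p) * (2 * ∫ y, f y) := by
    rw [integral_const_mul, integral_add hIx hI, integral_sub_left_eq_self f volume x]
    ring
  have : (∫ y, f (x - y) * f y) ≤ 2 ^ p * (2 * ∫ y, f y) * (1 + ‖x‖) ^ (-p) := by
    rw [hsum] at hmono; linarith [hmono]
  simpa [hf, hexp] using this
end

section
/- Define p_k = 2^{−k−2}, x_k = 2^{2k²}, h₋₁(n) = 1 if n = 0 and 0 otherwise, and recursively h_m(n) = h_{m−1}(n) + a_m·1_{{−m−x_m, m+x_m}}(n), where a₀ = 2 and for m ≥ 1, a_m = −(1/p_m)·(Σ_{k=0}^∞ p_k (h_{m−1}(m + x_k) + h_{m−1}(m − x_k)) − h_{m−1}(m)). Then for each m ≥ 0 and each n with |n| ≤ m, one has Σ_{k=0}^∞ p_k (h_m(n + x_k) + h_m(n − x_k)) − h_m(n) = 0. -/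
/-- The weights `p_k = 2^{-k-2}`. -/
noncomputable def pcoef (k : ℕ) : ℝ := ((2 : ℝ) ^ (k + 2))⁻¹

/-- The jumps `x_k = 2^{2k²}`. -/
def xseq (k : ℕ) : ℤ := 2 ^ (2 * k ^ 2)

/-- The correction coefficient `a_m`, computed from `h_{m-1}` (given as `f`):
`a₀ = 2` and `a_m = -(1/p_m) (Σ_k p_k (f(m+x_k)+f(m-x_k)) - f(m))` for `m ≥ 1`. -/
noncomputable def acoef (m : ℕ) (f : ℤ → ℝ) : ℝ :=
  if m = 0 then 2
  else -(1 / pcoef m) *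
    ((∑' k : ℕ, pcoef k * (f ((m : ℤ) + xseq k) + f ((m : ℤ) - xseq k))) - f (m : ℤ))

/-- The iterative construction: `hseq 0 = h₋₁ = 1_{{0}}` and
`hseq (m+1) = h_m = h_{m-1} + a_m · 1_{{-m-x_m, m+x_m}}`. -/
noncomputable def hseq : ℕ → ℤ → ℝ
  | 0 => fun n => if n = 0 then 1 else 0
  | m + 1 => fun n =>
      hseq m n +
        (if n = -(m : ℤ) - xseq m ∨ n = (m : ℤ) + xseq m then acoef m (hseq m) else 0)

lemma xseq_pos (k : ℕ) : 0 < xseq k := by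
  unfold xseq; positivity

lemma xseq_mono : StrictMono xseq := by
  intro k l h
  unfold xseq
  exact pow_lt_pow_right₀ one_lt_two (by nlinarith)

lemma xseq_succ (M : ℕ) : xseq M + 2 * (M : ℤ) + 2 ≤ xseq (M + 1) := by
  unfold xseq
  have h1 : 2 * (M+1)^2 = 2*M^2 + (4*M + 2) := by ring
  rw [h1, pow_add]
  have h2 : (2:ℤ) ^ (2*M^2) ≥ 1 := one_le_pow₀ one_le_two
  have h3 : (4*M + 2 : ℤ) + 1 ≤ 2 ^ (4*M+2) := by
    have := Nat.lt_two_pow_self (n := 4*M+2)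
    have : ((4*M+2 : ℕ) : ℤ) < (2:ℤ)^(4*M+2) := by exact_mod_cast this
    push_cast at this ⊢
    omega
  nlinarith [pow_pos (by norm_num : (0:ℤ) < 2) (2*M^2)]

lemma pcoef_pos (k : ℕ) : 0 < pcoef k := by unfold pcoef; positivity

lemma gap (M k : ℕ) (d : ℤ) (h1 : 0 < d) (h2 : d ≤ 2 * (M : ℤ)) :
    xseq M + d ≠ xseq k := by
  rcases le_or_gt k M with h | h
  · have := xseq_mono.le_iff_le.mpr h
    omega
  · have hk : xseq (M + 1) ≤ xseq k := xseq_mono.le_iff_le.mpr h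
    have := xseq_succ M
    omega

lemma hseq_zero (M : ℕ) (n : ℤ) (h : (M : ℤ) + xseq M ≤ |n|) : hseq M n = 0 := by
  induction M generalizing n with
  | zero =>
    have h0 := xseq_pos 0
    have : n ≠ 0 := by
      intro hn; rw [hn] at h; simp at h; omega
    simp [hseq, this]
  | succ M ih =>
    have hlt : (M : ℤ) + xseq M < (M + 1 : ℕ) + xseq (M + 1) := by
      have := xseq_mono (by omega : M < M + 1); push_cast; omega
    have h1 : hseq M n = 0 := ih n (by omega)
    have h2 : ¬(n = -(M : ℤ) - xseq M ∨ n = (M : ℤ) + xseq M) := by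
      rintro (rfl | rfl)
      · rw [abs_of_nonpos (by have := xseq_pos M; omega)] at h; push_cast at h; omega
      · rw [abs_of_nonneg (by have := xseq_pos M; omega)] at h; push_cast at h; omega
    simp [hseq, h1, h2]

lemma hseq_even (M : ℕ) (n : ℤ) : hseq M (-n) = hseq M n := by
  induction M generalizing n with
  | zero => simp [hseq, neg_eq_zero]
  | succ M ih =>
    have : (-n = -(M : ℤ) - xseq M ∨ -n = (M : ℤ) + xseq M) ↔
        (n = -(M : ℤ) - xseq M ∨ n = (M : ℤ) + xseq M) := by
      constructor <;> (rintro (h | h) <;> omega)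
    simp only [hseq, ih, this]

lemma tsum_cut (f : ℤ → ℝ) (B : ℤ) (hf : ∀ j : ℤ, B ≤ |j| → f j = 0) (n : ℤ) (N : ℕ)
    (hN : B + |n| ≤ xseq N) :
    (∑' k : ℕ, pcoef k * (f (n + xseq k) + f (n - xseq k))) =
      ∑ k ∈ Finset.range N, pcoef k * (f (n + xseq k) + f (n - xseq k)) := by
  apply tsum_eq_sum
  intro k hk
  have hkN : N ≤ k := by simpa using hk
  have hxk : xseq N ≤ xseq k := xseq_mono.le_iff_le.mpr hkN
  have h1 : f (n + xseq k) = 0 := hf _ (by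
    rcases abs_cases (n + xseq k) with ⟨he, _⟩ | ⟨he, _⟩ <;>
      rcases abs_cases n with ⟨e2, _⟩ | ⟨e2, _⟩ <;> omega)
  have h2 : f (n - xseq k) = 0 := hf _ (by
    rcases abs_cases (n - xseq k) with ⟨he, _⟩ | ⟨he, _⟩ <;>
      rcases abs_cases n with ⟨e2, _⟩ | ⟨e2, _⟩ <;> omega)
  rw [h1, h2]; ring

lemma gsum (M : ℕ) (n : ℤ) (hn : |n| ≤ (M : ℤ)) (N : ℕ) (hMN : M < N) (a : ℝ) :
    (∑ k ∈ Finset.range N, pcoef k *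
        ((if n + xseq k = -(M : ℤ) - xseq M ∨ n + xseq k = (M : ℤ) + xseq M then a else 0) +
         (if n - xseq k = -(M : ℤ) - xseq M ∨ n - xseq k = (M : ℤ) + xseq M then a else 0))) =
      pcoef M * a * ((if n = (M : ℤ) then 1 else 0) + (if n = -(M : ℤ) then 1 else 0)) := by
  have habs : -(M:ℤ) ≤ n ∧ n ≤ (M:ℤ) := abs_le.mp hn
  rw [Finset.sum_eq_single_of_mem M (Finset.mem_range.mpr hMN)]
  · have hxM := xseq_pos M
    have e1 : (n + xseq M = -(M : ℤ) - xseq M ∨ n + xseq M = (M : ℤ) + xseq M) ↔ n = (M:ℤ) := by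
      constructor
      · rintro (h | h) <;> omega
      · intro h; right; omega
    have e2 : (n - xseq M = -(M : ℤ) - xseq M ∨ n - xseq M = (M : ℤ) + xseq M) ↔ n = -(M:ℤ) := by
      constructor
      · rintro (h | h) <;> omega
      · intro h; left; omega
    simp only [e1, e2]
    by_cases h1 : n = (M:ℤ) <;> by_cases h2 : n = -(M:ℤ) <;> simp [h1, h2] <;> split_ifs <;> ring
  · intro k _ hkM
    have hxk := xseq_pos k
    have hxM := xseq_pos M
    have z1 : ¬(n + xseq k = -(M : ℤ) - xseq M ∨ n + xseq k = (M : ℤ) + xseq M) := by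
      rintro (h | h)
      · omega
      · rcases eq_or_lt_of_le habs.2 with he | hlt
        · exact hkM (xseq_mono.injective (by omega : xseq k = xseq M))
        · exact gap M k ((M:ℤ) - n) (by omega) (by omega) (by omega)
    have z2 : ¬(n - xseq k = -(M : ℤ) - xseq M ∨ n - xseq k = (M : ℤ) + xseq M) := by
      rintro (h | h)
      · rcases eq_or_lt_of_le habs.1 with he | hlt
        · exact hkM (xseq_mono.injective (by omega : xseq k = xseq M))
        · exact gap M k ((M:ℤ) + n) (by omega) (by omega) (by omega)
      · omega
    rw [if_neg z1, if_neg z2]; ring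

lemma hseq_succ_apply (M : ℕ) (j : ℤ) :
    hseq (M + 1) j = hseq M j +
      (if j = -(M : ℤ) - xseq M ∨ j = (M : ℤ) + xseq M then acoef M (hseq M) else 0) := rfl

lemma Lstep (M : ℕ) (n : ℤ) (hn : |n| ≤ (M : ℤ)) :
    (∑' k : ℕ, pcoef k * (hseq (M + 1) (n + xseq k) + hseq (M + 1) (n - xseq k))) -
        hseq (M + 1) n =
      ((∑' k : ℕ, pcoef k * (hseq M (n + xseq k) + hseq M (n - xseq k))) - hseq M n) +
        pcoef M * acoef M (hseq M) *
          ((if n = (M : ℤ) then 1 else 0) + (if n = -(M : ℤ) then 1 else 0)) := by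
  set a := acoef M (hseq M) with ha
  set B : ℤ := ((M : ℤ) + 1) + xseq (M + 1) with hB
  have hmono : xseq M < xseq (M + 1) := xseq_mono (Nat.lt_succ_self M)
  have hB1 : ∀ j : ℤ, B ≤ |j| → hseq (M + 1) j = 0 := by
    intro j hj
    apply hseq_zero (M + 1) j
    push_cast
    omega
  have hB2 : ∀ j : ℤ, B ≤ |j| → hseq M j = 0 := by
    intro j hj
    exact hseq_zero M j (by omega)
  have hN : B + |n| ≤ xseq (M + 2) := by
    have h1 := xseq_succ (M + 1)
    simp only [show M + 1 + 1 = M + 2 from rfl] at h1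
    push_cast at h1
    omega
  rw [tsum_cut _ B hB1 n (M + 2) hN, tsum_cut _ B hB2 n (M + 2) hN]
  have hind : hseq (M + 1) n = hseq M n := by
    rw [hseq_succ_apply]
    have hxM := xseq_pos M
    have : ¬(n = -(M : ℤ) - xseq M ∨ n = (M : ℤ) + xseq M) := by
      rintro (rfl | rfl)
      · rw [abs_of_nonpos (by omega)] at hn; omega
      · rw [abs_of_nonneg (by omega)] at hn; omega
    rw [if_neg this, add_zero]
  rw [hind]
  have hsplit : (∑ k ∈ Finset.range (M + 2),
      pcoef k * (hseq (M + 1) (n + xseq k) + hseq (M + 1) (n - xseq k))) =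
      (∑ k ∈ Finset.range (M + 2), pcoef k * (hseq M (n + xseq k) + hseq M (n - xseq k))) +
      (∑ k ∈ Finset.range (M + 2), pcoef k *
        ((if n + xseq k = -(M : ℤ) - xseq M ∨ n + xseq k = (M : ℤ) + xseq M then a else 0) +
         (if n - xseq k = -(M : ℤ) - xseq M ∨ n - xseq k = (M : ℤ) + xseq M then a else 0))) := by
    rw [← Finset.sum_add_distrib]
    apply Finset.sum_congr rfl
    intro k _
    rw [hseq_succ_apply, hseq_succ_apply]
    ring
  rw [hsplit, gsum M n hn (M + 2) (by omega) a]
  ring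

lemma Lsym (M : ℕ) (c : ℤ) :
    (∑' k : ℕ, pcoef k * (hseq M (-c + xseq k) + hseq M (-c - xseq k))) - hseq M (-c) =
    (∑' k : ℕ, pcoef k * (hseq M (c + xseq k) + hseq M (c - xseq k))) - hseq M c := by
  rw [hseq_even]
  congr 1
  apply tsum_congr
  intro k
  rw [show -c + xseq k = -(c - xseq k) by ring, show -c - xseq k = -(c + xseq k) by ring,
    hseq_even, hseq_even]
  ring

theorem stmt_11 (m : ℕ) (n : ℤ) (hn : |n| ≤ (m : ℤ)) :
    (∑' k : ℕ, pcoef k * (hseq (m + 1) (n + xseq k) + hseq (m + 1) (n - xseq k))) -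
      hseq (m + 1) n = 0 := by
  induction m generalizing n with
  | zero =>
    have hn0 : n = 0 := by
      have := abs_nonneg n
      rcases abs_cases n with ⟨he, _⟩ | ⟨he, _⟩ <;> simp at hn <;> omega
    subst hn0
    rw [Lstep 0 0 (by simp)]
    have hz : (∑' k : ℕ, pcoef k * (hseq 0 (0 + xseq k) + hseq 0 (0 - xseq k))) = 0 := by
      have hterm : ∀ k : ℕ, pcoef k * (hseq 0 (0 + xseq k) + hseq 0 (0 - xseq k)) = 0 := by
        intro k
        have hx := xseq_pos k
        have e1 : hseq 0 (0 + xseq k) = 0 := by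
          show (if (0 : ℤ) + xseq k = 0 then (1:ℝ) else 0) = 0
          rw [if_neg (by omega)]
        have e2 : hseq 0 (0 - xseq k) = 0 := by
          show (if (0 : ℤ) - xseq k = 0 then (1:ℝ) else 0) = 0
          rw [if_neg (by omega)]
        rw [e1, e2]; ring
      rw [tsum_congr hterm, tsum_zero]
    rw [hz]
    have hh : hseq 0 (0 : ℤ) = 1 := by
      show (if (0:ℤ) = 0 then (1:ℝ) else 0) = 1
      simp
    rw [hh]
    norm_num [pcoef, acoef]
  | succ m ih =>
    rw [Lstep (m + 1) n hn]
    by_cases h1 : n = ((m + 1 : ℕ) : ℤ)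
    · have h2 : ¬ (n = -((m + 1 : ℕ) : ℤ)) := by push_cast at h1 ⊢; omega
      rw [if_pos h1, if_neg h2]
      subst h1
      have hane : acoef (m + 1) (hseq (m + 1)) = -(1 / pcoef (m + 1)) *
          ((∑' k : ℕ, pcoef k * (hseq (m + 1) (((m + 1 : ℕ) : ℤ) + xseq k) +
            hseq (m + 1) (((m + 1 : ℕ) : ℤ) - xseq k))) - hseq (m + 1) ((m + 1 : ℕ) : ℤ)) := by
        rw [acoef, if_neg (Nat.succ_ne_zero m)]
      rw [hane]
      have hp := (pcoef_pos (m + 1)).ne'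
      field_simp
      ring
    · by_cases h2 : n = -((m + 1 : ℕ) : ℤ)
      · rw [if_neg h1, if_pos h2]
        subst h2
        rw [Lsym (m + 1) ((m + 1 : ℕ) : ℤ)]
        have hane : acoef (m + 1) (hseq (m + 1)) = -(1 / pcoef (m + 1)) *
            ((∑' k : ℕ, pcoef k * (hseq (m + 1) (((m + 1 : ℕ) : ℤ) + xseq k) +
              hseq (m + 1) (((m + 1 : ℕ) : ℤ) - xseq k))) - hseq (m + 1) ((m + 1 : ℕ) : ℤ)) := by
          rw [acoef, if_neg (Nat.succ_ne_zero m)]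
        rw [hane]
        have hp := (pcoef_pos (m + 1)).ne'
        field_simp
        ring
      · rw [if_neg h1, if_neg h2]
        have hn' : |n| ≤ ((m : ℕ) : ℤ) := by
          push_cast at hn h1 h2 ⊢
          rcases abs_cases n with ⟨he, _⟩ | ⟨he, _⟩ <;> omega
        rw [ih n hn']
        ring
end

section
/- Define p_k, x_k, h_m, a_m as in the iterative construction (p_k = 2^{−k−2}, x_k = 2^{2k²}, h₋₁ = 1_{{0}}, h_m = h_{m−1} + a_m 1_{{−m−x_m, m+x_m}}, a₀ = 2, a_m = −L₀h_{m−1}(m)/p_m). Then for every ε > 0 there exists C_ε such that p_m |a_m| ≤ Σ_{k=0}^∞ p_k (|h_{m−1}(m + x_k)| + |h_{m−1}(m − x_k)|) + |h_{m−1}(m)| ≤ C_ε (1 + m)^ε for every m ≥ 0. -/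
lemma one_le_xseq (k : ℕ) : 1 ≤ xseq k := xseq_pos k

lemma xseq_mono_s12 : Monotone xseq := fun a b h =>
  pow_le_pow_right₀ (by norm_num) (by nlinarith [sq_nonneg (a+b)] : 2 * a ^ 2 ≤ 2 * b ^ 2)

lemma four_xseq_le {j k : ℕ} (h : j < k) : 4 * xseq j ≤ xseq k := by
  have : (4 : ℤ) * xseq j = 2 ^ (2 * j ^ 2 + 2) := by
    unfold xseq; rw [pow_add]; ring
  rw [this]
  apply pow_le_pow_right₀ (by norm_num)
  have : j + 1 ≤ k := h
  nlinarith

lemma coe_le_xseq (j : ℕ) : (j : ℤ) ≤ xseq j := by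
  have h1 : j < 2 ^ j := Nat.lt_two_pow_self (n := j)
  have h2 : (2:ℕ) ^ j ≤ 2 ^ (2 * j ^ 2) := Nat.pow_le_pow_right (by norm_num) (by nlinarith)
  have h3 := h1.le.trans h2
  unfold xseq
  exact_mod_cast h3

lemma pt_pos (j : ℕ) : 0 < (j : ℤ) + xseq j := by have := xseq_pos j; have : (0:ℤ) ≤ j := Int.ofNat_nonneg j; linarith [xseq_pos j]

lemma pt_strictMono : StrictMono (fun j : ℕ => (j : ℤ) + xseq j) := by
  intro a b h
  have := xseq_mono_s12 h.le
  have : xseq a < xseq b := by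
    calc xseq a < 4 * xseq a := by linarith [xseq_pos a]
    _ ≤ xseq b := four_xseq_le h
  have : (a : ℤ) < b := by exact_mod_cast h
  push_cast
  linarith [four_xseq_le h, xseq_pos a]


lemma hseq_support (m : ℕ) (n : ℤ) (h : hseq m n ≠ 0) :
    n = 0 ∨ ∃ j < m, n = (j : ℤ) + xseq j ∨ n = -(j : ℤ) - xseq j := by
  induction m with
  | zero =>
    left
    by_contra hn
    simp only [hseq, if_neg hn] at h
    exact h rfl
  | succ m ih =>
    by_cases h1 : hseq m n = 0
    · by_cases h2 : n = -(m : ℤ) - xseq m ∨ n = (m : ℤ) + xseq m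
      · right
        exact ⟨m, Nat.lt_succ_self m, h2.symm.imp id id⟩
      · exfalso
        simp only [hseq, h1, if_neg h2, add_zero] at h
        exact h rfl
    · rcases ih h1 with h0 | ⟨j, hj, hj2⟩
      · exact Or.inl h0
      · exact Or.inr ⟨j, hj.trans (Nat.lt_succ_self m), hj2⟩

lemma hseq_eq_zero (m : ℕ) (n : ℤ) (h0 : n ≠ 0)
    (h : ∀ j < m, n ≠ (j : ℤ) + xseq j ∧ n ≠ -(j : ℤ) - xseq j) : hseq m n = 0 := by
  by_contra hc
  rcases hseq_support m n hc with h' | ⟨j, hj, hj'⟩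
  · exact h0 h'
  · rcases hj' with h' | h'
    · exact (h j hj).1 h'
    · exact (h j hj).2 h'

lemma hseq_at_zero (m : ℕ) : hseq m 0 = 1 := by
  induction m with
  | zero => simp [hseq]
  | succ m ih =>
    have hcond : ¬((0:ℤ) = -(m : ℤ) - xseq m ∨ (0:ℤ) = (m : ℤ) + xseq m) := by
      push_neg
      constructor
      · intro hc
        have := pt_pos m
        omega
      · intro hc
        have := pt_pos m
        omega
    simp only [hseq, ih, if_neg hcond, add_zero]

lemma hseq_at_pt (m j : ℕ) (h : j < m) :
    hseq m ((j : ℤ) + xseq j) = acoef j (hseq j) := by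
  induction m with
  | zero => omega
  | succ m ih =>
    rcases Nat.lt_succ_iff_lt_or_eq.mp h with h' | h'
    · have hcond : ¬(((j:ℤ) + xseq j) = -(m : ℤ) - xseq m ∨ ((j:ℤ) + xseq j) = (m : ℤ) + xseq m) := by
        push_neg
        constructor
        · intro hc
          have h1 := pt_pos j
          have h2 := pt_pos m
          omega
        · intro hc
          exact absurd (pt_strictMono.injective hc) h'.ne
      simp only [hseq, ih h', if_neg hcond, add_zero]
    · subst h'
      have hz : hseq j ((j:ℤ) + xseq j) = 0 := by
        apply hseq_eq_zero
        · exact (pt_pos j).ne'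
        · intro i hi
          constructor
          · intro hc
            exact absurd (pt_strictMono.injective hc.symm) hi.ne
          · intro hc
            have h1 := pt_pos j
            have h2 := pt_pos i
            omega
      have hcond : (((j:ℤ) + xseq j) = -(j : ℤ) - xseq j ∨ ((j:ℤ) + xseq j) = (j : ℤ) + xseq j) :=
        Or.inr rfl
      simp only [hseq, hz, if_pos hcond, zero_add, or_true, true_or, if_true]

lemma hseq_at_negpt (m j : ℕ) (h : j < m) :
    hseq m (-(j : ℤ) - xseq j) = acoef j (hseq j) := by
  induction m with
  | zero => omega
  | succ m ih =>
    rcases Nat.lt_succ_iff_lt_or_eq.mp h with h' | h'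
    · have hcond : ¬((-(j:ℤ) - xseq j) = -(m : ℤ) - xseq m ∨ (-(j:ℤ) - xseq j) = (m : ℤ) + xseq m) := by
        push_neg
        constructor
        · intro hc
          have : ((j:ℤ) + xseq j) = ((m:ℤ) + xseq m) := by omega
          exact absurd (pt_strictMono.injective this) h'.ne
        · intro hc
          have h1 := pt_pos j
          have h2 := pt_pos m
          omega
      simp only [hseq, ih h', if_neg hcond, add_zero]
    · subst h'
      have hz : hseq j (-(j:ℤ) - xseq j) = 0 := by
        apply hseq_eq_zero
        · have := pt_pos j; omega
        · intro i hi
          constructor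
          · intro hc
            have h1 := pt_pos j
            have h2 := pt_pos i
            omega
          · intro hc
            have : ((i:ℤ) + xseq i) = ((j:ℤ) + xseq j) := by omega
            exact absurd (pt_strictMono.injective this) hi.ne
      have hcond : ((-(j:ℤ) - xseq j) = -(j : ℤ) - xseq j ∨ (-(j:ℤ) - xseq j) = (j : ℤ) + xseq j) :=
        Or.inl rfl
      simp only [hseq, hz, if_pos hcond, zero_add, or_true, true_or, if_true]

lemma pcoef_eq (k : ℕ) : pcoef k = (1/4) * (1/2) ^ k := by
  unfold pcoef
  rw [pow_add, mul_inv, ← inv_pow]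
  norm_num
  ring

lemma pcoef_funext : pcoef = fun k => (1/4) * (1/2) ^ k := funext pcoef_eq

lemma summable_pcoef : Summable pcoef := by
  rw [pcoef_funext]
  exact (summable_geometric_of_lt_one (by norm_num) (by norm_num)).mul_left _

lemma abs_tsum_le {f : ℕ → ℝ} (hf : Summable f) : |∑' k, f k| ≤ ∑' k, |f k| := by
  rw [← Real.norm_eq_abs]
  exact (norm_tsum_le_tsum_norm (by simpa using hf.abs)).trans_eq (by simp [Real.norm_eq_abs])

lemma tsum_pcoef : ∑' k, pcoef k = 1/2 := by
  simp only [pcoef_eq]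
  rw [tsum_mul_left, tsum_geometric_of_lt_one (by norm_num) (by norm_num)]
  norm_num

lemma hseq_bounded (m : ℕ) : ∃ M : ℝ, 0 ≤ M ∧ ∀ n : ℤ, |hseq m n| ≤ M := by
  induction m with
  | zero =>
    refine ⟨1, by norm_num, fun n => ?_⟩
    simp only [hseq]
    split <;> norm_num
  | succ m ih =>
    obtain ⟨M, hM0, hM⟩ := ih
    refine ⟨M + |acoef m (hseq m)|, by positivity, fun n => ?_⟩
    simp only [hseq]
    refine (abs_add_le _ _).trans (add_le_add (hM n) ?_)
    split
    · exact le_refl _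
    · simp [abs_nonneg]

lemma summable_abs_part (m : ℕ) (c : ℤ) :
    Summable (fun k => pcoef k * (|hseq m (c + xseq k)| + |hseq m (c - xseq k)|)) := by
  obtain ⟨M, hM0, hM⟩ := hseq_bounded m
  apply Summable.of_nonneg_of_le
  · intro k
    exact mul_nonneg (pcoef_pos k).le (by positivity)
  · intro k
    exact mul_le_mul_of_nonneg_left (add_le_add (hM _) (hM _)) (pcoef_pos k).le
  · exact (summable_pcoef.mul_right (M + M))

lemma summable_part (m : ℕ) (f : ℤ → ℝ) (M : ℝ) (hM : ∀ n, |f n| ≤ M) (c : ℤ) :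
    Summable (fun k => pcoef k * (f (c + xseq k) + f (c - xseq k))) := by
  apply Summable.of_norm_bounded (g := fun k => pcoef k * (M + M))
  · exact summable_pcoef.mul_right (M + M)
  · intro k
    rw [Real.norm_eq_abs, abs_mul, abs_of_pos (pcoef_pos k)]
    apply mul_le_mul_of_nonneg_left _ (pcoef_pos k).le
    exact (abs_add_le _ _).trans (add_le_add (hM _) (hM _))

/-- The quantity `S m`. -/
noncomputable def Sq (m : ℕ) : ℝ :=
  (∑' k : ℕ, pcoef k * (|hseq m ((m : ℤ) + xseq k)| + |hseq m ((m : ℤ) - xseq k)|)) +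
    |hseq m (m : ℤ)|

lemma Sq_nonneg (m : ℕ) : 0 ≤ Sq m := by
  unfold Sq
  have h1 : 0 ≤ ∑' k : ℕ, pcoef k * (|hseq m ((m : ℤ) + xseq k)| + |hseq m ((m : ℤ) - xseq k)|) :=
    tsum_nonneg fun k => mul_nonneg (pcoef_pos k).le (by positivity)
  positivity

lemma part1 (m : ℕ) : pcoef m * |acoef m (hseq m)| ≤ Sq m := by
  rcases Nat.eq_zero_or_pos m with rfl | hm
  · have h1 : pcoef 0 * |acoef 0 (hseq 0)| = 1/2 := by
      simp [acoef, pcoef]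
      norm_num
    rw [h1]
    unfold Sq
    simp only [Nat.cast_zero, hseq_at_zero, abs_one]
    have h2 : 0 ≤ ∑' k : ℕ, pcoef k * (|hseq 0 ((0:ℤ) + xseq k)| + |hseq 0 ((0:ℤ) - xseq k)|) :=
      tsum_nonneg fun k => mul_nonneg (pcoef_pos k).le (by positivity)
    linarith
  · obtain ⟨M, hM0, hM⟩ := hseq_bounded m
    have hm0 : m ≠ 0 := hm.ne'
    rw [acoef, if_neg hm0]
    rw [abs_mul, abs_neg, abs_div, abs_one, abs_of_pos (pcoef_pos m)]
    rw [← mul_assoc, mul_one_div, div_self (pcoef_pos m).ne', one_mul]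
    refine (abs_sub _ _).trans (add_le_add ?_ (le_refl _))
    have hsum := summable_part m (hseq m) M hM (m:ℤ)
    calc |∑' k : ℕ, pcoef k * (hseq m ((m : ℤ) + xseq k) + hseq m ((m : ℤ) - xseq k))|
        ≤ ∑' k : ℕ, |pcoef k * (hseq m ((m : ℤ) + xseq k) + hseq m ((m : ℤ) - xseq k))| :=
          abs_tsum_le hsum
      _ ≤ ∑' k : ℕ, pcoef k * (|hseq m ((m : ℤ) + xseq k)| + |hseq m ((m : ℤ) - xseq k)|) := by
          apply Summable.tsum_le_tsum _ _ (summable_abs_part m m)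
          · intro k
            rw [abs_mul, abs_of_pos (pcoef_pos k)]
            exact mul_le_mul_of_nonneg_left (abs_add_le _ _) (pcoef_pos k).le
          · exact hsum.abs

lemma abs_acoef_le (m : ℕ) : |acoef m (hseq m)| ≤ 2 ^ (m + 2) * Sq m := by
  have h := part1 m
  have hp : (2:ℝ) ^ (m+2) * pcoef m = 1 := by
    unfold pcoef
    rw [mul_inv_cancel₀ (by positivity)]
  calc |acoef m (hseq m)| = 2 ^ (m+2) * (pcoef m * |acoef m (hseq m)|) := by
        rw [← mul_assoc, hp, one_mul]
    _ ≤ 2 ^ (m+2) * Sq m := mul_le_mul_of_nonneg_left h (by positivity)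

lemma keyD (ε : ℝ) (hε : 0 < ε) (l : ℕ) (hl2 : 2 ≤ l) (hl5 : 5 ≤ ε * l) :
    (2:ℝ) ^ (l + 2) * ((1:ℝ) + l) ^ ε ≤ (1 + (xseq l : ℝ) / 2) ^ ε / 4 := by
  have hb : (0:ℝ) < 2 := two_pos
  have h1l : (1:ℝ) + l ≤ (2:ℝ) ^ (l : ℕ) := by
    have := Nat.lt_two_pow_self (n := l)
    have : (l:ℝ) + 1 ≤ (2:ℝ) ^ (l:ℕ) := by exact_mod_cast this
    linarith
  have hlR : (2:ℝ) ≤ (l:ℝ) := by exact_mod_cast hl2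
  have hone : 1 ≤ 2 * l ^ 2 := by nlinarith
  calc (2:ℝ) ^ (l + 2) * ((1:ℝ) + l) ^ ε
      ≤ (2:ℝ) ^ (l + 2) * ((2:ℝ) ^ (l:ℕ)) ^ ε := by
        apply mul_le_mul_of_nonneg_left _ (by positivity)
        exact Real.rpow_le_rpow (by positivity) h1l hε.le
    _ = (2:ℝ) ^ (((l:ℝ) + 2) + (l:ℝ) * ε) := by
        rw [← Real.rpow_natCast 2 (l+2), ← Real.rpow_natCast 2 l,
          ← Real.rpow_mul hb.le, ← Real.rpow_add hb]
        push_cast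
        ring_nf
    _ ≤ (2:ℝ) ^ ((((2 * l ^ 2 - 1 : ℕ)):ℝ) * ε - 2) := by
        apply Real.rpow_le_rpow_of_exponent_le (by norm_num)
        rw [Nat.cast_sub hone]
        push_cast
        nlinarith [mul_le_mul_of_nonneg_right hl5 (by positivity : (0:ℝ) ≤ (l:ℝ)),
          mul_le_mul_of_nonneg_left hlR hε.le]
    _ = ((2:ℝ) ^ (2 * l ^ 2 - 1 : ℕ)) ^ ε / 4 := by
        rw [Real.rpow_sub hb, ← Real.rpow_natCast 2 (2 * l ^ 2 - 1), ← Real.rpow_mul hb.le]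
        norm_num
    _ ≤ (1 + (xseq l : ℝ) / 2) ^ ε / 4 := by
        apply div_le_div_of_nonneg_right _ (by norm_num)
        apply Real.rpow_le_rpow (by positivity) _ hε.le
        have hx : (xseq l : ℝ) = 2 ^ (2 * l ^ 2) := by
          unfold xseq; push_cast; ring
        have h2 : (2:ℝ) ^ (2 * l ^ 2) = 2 ^ (2 * l ^ 2 - 1) * 2 := by
          rw [← pow_succ]
          congr 1
          omega
        rw [hx, h2]
        linarith [pow_nonneg hb.le (2 * l ^ 2 - 1)]

theorem growth (ε : ℝ) (hε : 0 < ε) : ∃ C : ℝ, 0 < C ∧ ∀ m : ℕ, Sq m ≤ C * (1 + m : ℝ) ^ ε := by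
  set J : ℕ := max 2 ⌈(5:ℝ)/ε⌉₊ with hJdef
  set A : ℝ := 1 + ∑ j ∈ Finset.range J, |acoef j (hseq j)| with hAdef
  have hsum0 : 0 ≤ ∑ j ∈ Finset.range J, |acoef j (hseq j)| :=
    Finset.sum_nonneg fun i _ => abs_nonneg _
  have hA1 : 1 ≤ A := by rw [hAdef]; linarith
  have hA0 : 0 < A := by linarith
  have hAsm : ∀ j, j < J → |acoef j (hseq j)| ≤ A := by
    intro j hj
    have := Finset.single_le_sum (f := fun j => |acoef j (hseq j)|)
      (fun i _ => abs_nonneg _) (Finset.mem_range.mpr hj)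
    rw [hAdef]; linarith
  have hDl : ∀ l : ℕ, J ≤ l → (2:ℝ)^(l+2) * ((1:ℝ)+l)^ε ≤ (1 + (xseq l : ℝ)/2)^ε / 4 := by
    intro l hl
    apply keyD ε hε l (le_trans (le_max_left _ _) hl)
    have h1 : ⌈(5:ℝ)/ε⌉₊ ≤ l := le_trans (le_max_right _ _) hl
    have h2 : (5:ℝ)/ε ≤ l := Nat.ceil_le.mp h1
    rw [div_le_iff₀ hε] at h2
    linarith [h2]
  refine ⟨4 * A, by linarith, ?_⟩
  intro m
  induction m using Nat.strong_induction_on with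
  | _ m IH =>
  have hm1 : (1:ℝ) ≤ 1 + (m:ℝ) := by
    have : (0:ℝ) ≤ (m:ℝ) := Nat.cast_nonneg m
    linarith
  have hrpow1 : (1:ℝ) ≤ ((1:ℝ) + m) ^ ε := Real.one_le_rpow hm1 hε.le
  set B : ℝ := A + A * ((1:ℝ) + m) ^ ε with hBdef
  have hB0 : 0 ≤ B := by
    have : (0:ℝ) ≤ A * ((1:ℝ) + m) ^ ε := by positivity
    rw [hBdef]; linarith
  -- the "large l" bound
  have hbig : ∀ j l : ℕ, j ≤ l → J ≤ l → j < m → (xseq l ≤ 2 * (m:ℤ)) →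
      |acoef j (hseq j)| ≤ A * ((1:ℝ) + m) ^ ε := by
    intro j l hjl hJl hjm hxm
    have hSq := IH j hjm
    have h1 : ((1:ℝ)+j) ^ ε ≤ ((1:ℝ)+l) ^ ε := by
      apply Real.rpow_le_rpow (by positivity) _ hε.le
      have : (j:ℝ) ≤ l := by exact_mod_cast hjl
      linarith
    have h2 : (2:ℝ)^(j+2) ≤ (2:ℝ)^(l+2) := pow_le_pow_right₀ one_le_two (by omega)
    have hxl : (xseq l : ℝ) / 2 ≤ (m:ℝ) := by
      have : (xseq l : ℝ) ≤ 2 * m := by exact_mod_cast hxm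
      linarith
    calc |acoef j (hseq j)| ≤ 2 ^ (j+2) * Sq j := abs_acoef_le j
      _ ≤ 2 ^ (j+2) * (4 * A * ((1:ℝ)+j) ^ ε) :=
          mul_le_mul_of_nonneg_left hSq (by positivity)
      _ ≤ 2 ^ (l+2) * (4 * A * ((1:ℝ)+l) ^ ε) := by
          apply mul_le_mul h2 (mul_le_mul_of_nonneg_left h1 (by positivity)) (by positivity)
            (by positivity)
      _ = 4 * A * (2 ^ (l+2) * ((1:ℝ)+l) ^ ε) := by ring
      _ ≤ 4 * A * ((1 + (xseq l : ℝ)/2) ^ ε / 4) :=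
          mul_le_mul_of_nonneg_left (hDl l hJl) (by positivity)
      _ ≤ 4 * A * (((1:ℝ) + m) ^ ε / 4) := by
          apply mul_le_mul_of_nonneg_left _ (by positivity)
          apply div_le_div_of_nonneg_right _ (by norm_num)
          have hx0 : (0:ℝ) ≤ (xseq l : ℝ) := by exact_mod_cast (xseq_pos l).le
          exact Real.rpow_le_rpow (by linarith) (by linarith) hε.le
      _ = A * ((1:ℝ) + m) ^ ε := by ring
  -- unified bound for a_j under the case data
  have habsj : ∀ j : ℕ, j < m → (∃ l : ℕ, j ≤ l ∧ xseq l ≤ 2 * (m:ℤ)) →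
      |acoef j (hseq j)| ≤ B := by
    intro j hjm ⟨l, hjl, hxl⟩
    by_cases hJl : J ≤ l
    · have := hbig j l hjl hJl hjm hxl
      rw [hBdef]; linarith
    · have hjJ : j < J := lt_of_le_of_lt hjl (not_le.mp hJl)
      have := hAsm j hjJ
      have h2 : (0:ℝ) ≤ A * ((1:ℝ) + m) ^ ε := by positivity
      rw [hBdef]; linarith
  -- pointwise bounds at m ± x_k
  have hpt : ∀ k : ℕ, |hseq m ((m:ℤ) + xseq k)| + |hseq m ((m:ℤ) - xseq k)| ≤ B + B := by
    intro k
    have hplus : |hseq m ((m:ℤ) + xseq k)| ≤ B := by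
      by_cases h0 : hseq m ((m:ℤ) + xseq k) = 0
      · rw [h0, abs_zero]; exact hB0
      · rcases hseq_support m _ h0 with hz | ⟨j, hjm, hj | hj⟩
        · exfalso
          have := xseq_pos k
          have : (0:ℤ) ≤ m := Int.ofNat_nonneg m
          omega
        · rw [hj, hseq_at_pt m j hjm]
          apply habsj j hjm
          refine ⟨j, le_refl j, ?_⟩
          have hkj : k < j := by
            by_contra hc
            have := xseq_mono_s12 (not_lt.mp hc)
            have hjm' : (j:ℤ) < m := by exact_mod_cast hjm
            omega
          have h4 := four_xseq_le hkj
          have := xseq_pos k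
          omega
        · exfalso
          have h1 := pt_pos j
          have := xseq_pos k
          have : (0:ℤ) ≤ m := Int.ofNat_nonneg m
          omega
    have hminus : |hseq m ((m:ℤ) - xseq k)| ≤ B := by
      by_cases h0 : hseq m ((m:ℤ) - xseq k) = 0
      · rw [h0, abs_zero]; exact hB0
      · rcases hseq_support m _ h0 with hz | ⟨j, hjm, hj | hj⟩
        · rw [hz, hseq_at_zero, abs_one]
          rw [hBdef]
          have : (0:ℝ) ≤ A * ((1:ℝ) + m) ^ ε := by positivity
          linarith
        · rw [hj, hseq_at_pt m j hjm]
          apply habsj j hjm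
          refine ⟨max j k, le_max_left _ _, ?_⟩
          have hxj := xseq_pos j
          have hxk := xseq_pos k
          have hj0 : (0:ℤ) ≤ j := Int.ofNat_nonneg j
          rcases max_cases j k with ⟨hmax, _⟩ | ⟨hmax, _⟩ <;> rw [hmax] <;> omega
        · rw [hj, hseq_at_negpt m j hjm]
          apply habsj j hjm
          refine ⟨k, ?_, ?_⟩
          · by_contra hc
            have hkj : k ≤ j := by omega
            have := xseq_mono_s12 hkj
            have hj0 : (0:ℤ) ≤ j := Int.ofNat_nonneg j
            have hm0 : (1:ℤ) ≤ m := by exact_mod_cast Nat.one_le_iff_ne_zero.mpr (by omega)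
            omega
          · have hjk : j < k := by
              by_contra hc
              have := xseq_mono_s12 (not_lt.mp hc)
              have hj0 : (0:ℤ) ≤ j := Int.ofNat_nonneg j
              have hm0 : (1:ℤ) ≤ m := by exact_mod_cast Nat.one_le_iff_ne_zero.mpr (by omega)
              omega
            have h4 := four_xseq_le hjk
            have hcj := coe_le_xseq j
            omega
    linarith
  -- bound for the central term
  have hctr : |hseq m (m:ℤ)| ≤ B := by
    by_cases h0 : hseq m (m:ℤ) = 0
    · rw [h0, abs_zero]; exact hB0
    · rcases hseq_support m _ h0 with hz | ⟨j, hjm, hj | hj⟩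
      · rw [hz, hseq_at_zero, abs_one]
        rw [hBdef]
        have : (0:ℝ) ≤ A * ((1:ℝ) + m) ^ ε := by positivity
        linarith
      · rw [hj, hseq_at_pt m j hjm]
        apply habsj j hjm
        refine ⟨j, le_refl j, ?_⟩
        have hj0 : (0:ℤ) ≤ j := Int.ofNat_nonneg j
        omega
      · exfalso
        have h1 := pt_pos j
        have : (0:ℤ) ≤ m := Int.ofNat_nonneg m
        omega
  -- sum up
  have htsum : (∑' k : ℕ, pcoef k * (|hseq m ((m : ℤ) + xseq k)| + |hseq m ((m : ℤ) - xseq k)|))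
      ≤ B := by
    calc (∑' k : ℕ, pcoef k * (|hseq m ((m : ℤ) + xseq k)| + |hseq m ((m : ℤ) - xseq k)|))
        ≤ ∑' k : ℕ, pcoef k * (B + B) := by
          apply Summable.tsum_le_tsum _ (summable_abs_part m m) (summable_pcoef.mul_right (B + B))
          intro k
          exact mul_le_mul_of_nonneg_left (hpt k) (pcoef_pos k).le
      _ = (∑' k : ℕ, pcoef k) * (B + B) := tsum_mul_right
      _ = B := by rw [tsum_pcoef]; ring
  have : Sq m ≤ B + B := add_le_add htsum hctr
  rw [hBdef] at this
  calc Sq m ≤ A + A * ((1:ℝ) + m) ^ ε + (A + A * ((1:ℝ) + m) ^ ε) := this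
    _ ≤ 4 * A * ((1:ℝ) + m) ^ ε := by nlinarith


theorem stmt_12 (ε : ℝ) (hε : 0 < ε) :
    ∃ C : ℝ, ∀ m : ℕ,
      pcoef m * |acoef m (hseq m)| ≤
          (∑' k : ℕ, pcoef k *
            (|hseq m ((m : ℤ) + xseq k)| + |hseq m ((m : ℤ) - xseq k)|)) +
            |hseq m (m : ℤ)| ∧
        (∑' k : ℕ, pcoef k *
            (|hseq m ((m : ℤ) + xseq k)| + |hseq m ((m : ℤ) - xseq k)|)) +
            |hseq m (m : ℤ)| ≤ C * (1 + m : ℝ) ^ ε := by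
  obtain ⟨C, hC0, hC⟩ := growth ε hε
  exact ⟨C, fun m => ⟨part1 m, hC m⟩⟩
end
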